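/- Let Δ̃(x,t) be the formal power series in t with Δ̃(x,0) = 1 and Δ̃² = (1 − t·x^{-1}(1+x)²)² − 4t²·x^{-1}(1+x)². Then CT_x [((1−x)/(1+x))·Δ̃(x,t)] = 1, where (1−x)/(1+x) is expanded as a power series in x. -/

import Mathlib

open PowerSeries

/-- The Laurent series `x` in `ℚ((x))`. -/
noncomputable def xL : LaurentSeries ℚ := HahnSeries.single 1 1

/-- `u = x⁻¹(1+x)² = x⁻¹ + 2 + x`. -/
noncomputable def uL : LaurentSeries ℚ := xL⁻¹ * (1 + xL) ^ 2

/-- `Δ̃(x,t)` is the power series in `t` with coefficients in `ℚ((x))` such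
that `Δ̃(x,0) = 1` and `Δ̃² = (1 − ut)² − 4ut²` where `u = x⁻¹(1+x)²`. -/
def IsDeltaH (Δ : PowerSeries (LaurentSeries ℚ)) : Prop :=
  constantCoeff Δ = 1 ∧
  Δ ^ 2 = (1 - C uL * X) ^ 2 - 4 * C uL * X ^ 2

section
open HahnSeries LaurentPolynomial
noncomputable def MX : Multiplicative ℤ →* LaurentSeries ℚ where
  toFun m := HahnSeries.single (Multiplicative.toAdd m) (1:ℚ)
  map_one' := by simp
  map_mul' a b := by
    rw [HahnSeries.single_mul_single, one_mul]; rfl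

noncomputable def ME : Multiplicative ℤ →* ℚ where
  toFun m := (-1:ℚ) ^ (Multiplicative.toAdd m)
  map_one' := by simp
  map_mul' a b := by
    simpa using zpow_add₀ (by norm_num : (-1:ℚ) ≠ 0) _ _

noncomputable def MS : Multiplicative ℤ →* LaurentPolynomial ℚ where
  toFun m := T (-(Multiplicative.toAdd m))
  map_one' := by simp only [toAdd_one, neg_zero, T_zero]
  map_mul' a b := by simp only [toAdd_mul, neg_add, T_add]

noncomputable def Φ : LaurentPolynomial ℚ →ₐ[ℚ] LaurentSeries ℚ :=
  AddMonoidAlgebra.lift ℚ _ ℤ MX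
noncomputable def ev : LaurentPolynomial ℚ →ₐ[ℚ] ℚ :=
  AddMonoidAlgebra.lift ℚ _ ℤ ME
noncomputable def σp : LaurentPolynomial ℚ →ₐ[ℚ] LaurentPolynomial ℚ :=
  AddMonoidAlgebra.lift ℚ _ ℤ MS

lemma Φ_single (n : ℤ) (b : ℚ) : Φ (AddMonoidAlgebra.single n b) = HahnSeries.single n b := by
  rw [Φ, show (AddMonoidAlgebra.single n b : LaurentPolynomial ℚ) = AddMonoidAlgebra.single n b from rfl,
    AddMonoidAlgebra.lift_single]
  rw [show (MX (Multiplicative.ofAdd n)) = HahnSeries.single n (1:ℚ) from rfl,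
    Algebra.smul_def,
    RingHom.congr_fun (Subsingleton.elim (algebraMap ℚ (LaurentSeries ℚ)) (HahnSeries.C : ℚ →+* LaurentSeries ℚ)) b,
    HahnSeries.C_apply, HahnSeries.single_mul_single, zero_add, mul_one]

lemma ev_single (n : ℤ) (b : ℚ) : ev (AddMonoidAlgebra.single n b) = b * (-1:ℚ)^n := by
  rw [ev, show (AddMonoidAlgebra.single n b : LaurentPolynomial ℚ) = AddMonoidAlgebra.single n b from rfl,
    AddMonoidAlgebra.lift_single]
  simp [ME, smul_eq_mul]

lemma σp_single (n : ℤ) (b : ℚ) : σp (AddMonoidAlgebra.single n b) = AddMonoidAlgebra.single (-n) b := by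
  rw [σp, show (AddMonoidAlgebra.single n b : LaurentPolynomial ℚ) = AddMonoidAlgebra.single n b from rfl,
    AddMonoidAlgebra.lift_single]
  rw [show (MS (Multiplicative.ofAdd n)) = T (-n) from rfl, T]
  rw [AddMonoidAlgebra.smul_single]
  simp

lemma Φ_T (n : ℤ) : Φ (T n) = HahnSeries.single n (1:ℚ) := Φ_single n 1
lemma ev_T (n : ℤ) : ev (T n) = (-1:ℚ)^n := by simpa using ev_single n 1
lemma σp_T (n : ℤ) : σp (T n) = T (-n) := σp_single n 1

lemma single_mul_singleL (a b : ℤ) (r s : ℚ) :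
    (HahnSeries.single a r * HahnSeries.single b s : LaurentSeries ℚ)
      = HahnSeries.single (a+b) (r*s) := HahnSeries.single_mul_single

lemma oneL : (1 : LaurentSeries ℚ) = HahnSeries.single 0 1 := rfl

lemma xL_inv : xL⁻¹ = HahnSeries.single (-1) (1:ℚ) := by
  rw [xL]
  refine inv_eq_of_mul_eq_one_right ?_
  rw [single_mul_singleL]
  norm_num [oneL]

lemma uL_eq : uL = HahnSeries.single (-1) 1 + 2 + HahnSeries.single 1 1 := by
  have h2 : (2 : LaurentSeries ℚ) = HahnSeries.single 0 2 := by
    have h21 : (2 : LaurentSeries ℚ) = 1 + 1 := by norm_num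
    rw [h21, oneL]
    ext k
    by_cases hk : k = 0 <;> simp [HahnSeries.coeff_single, hk] <;> norm_num
  have hab : (HahnSeries.single (-1) 1 * HahnSeries.single 1 1 : LaurentSeries ℚ) = 1 := by
    rw [single_mul_singleL]; norm_num [oneL]
  have hab2 : (HahnSeries.single (-1) 1 * HahnSeries.single 1 1 ^ 2 : LaurentSeries ℚ)
      = HahnSeries.single 1 1 := by
    rw [sq, ← mul_assoc, hab, one_mul]
  have key : uL = HahnSeries.single (-1) 1 * (1 + HahnSeries.single 1 1)^2 := by
    rw [uL, xL_inv, xL]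
  rw [key]
  calc HahnSeries.single (-1) (1:ℚ) * (1 + HahnSeries.single 1 1)^2
      = HahnSeries.single (-1) 1 + 2*(HahnSeries.single (-1) 1 * HahnSeries.single 1 1)
        + HahnSeries.single (-1) 1 * HahnSeries.single 1 1 ^2 := by ring
    _ = _ := by rw [hab, hab2, mul_one]

noncomputable def uP : LaurentPolynomial ℚ := T (-1) + 2 + T 1

lemma Φ_uP : Φ uP = uL := by
  rw [uP, uL_eq, map_add, map_add, Φ_T, Φ_T, map_ofNat Φ 2]

lemma ev_uP : ev uP = 0 := by
  rw [uP, map_add, map_add, ev_T, ev_T, map_ofNat ev 2]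
  norm_num

lemma σp_uP : σp uP = uP := by
  rw [uP, map_add, map_add, σp_T, σp_T, map_ofNat σp 2, neg_neg]
  ring

noncomputable def G : PowerSeries ℚ := PowerSeries.mk fun k => if k = 0 then 1 else 2*(-1:ℚ)^k

lemma G_spec : (1 + PowerSeries.X) * G = 1 - PowerSeries.X := by
  ext k
  rw [add_mul, one_mul, map_add, map_sub]
  cases k with
  | zero => simp [G]
  | succ m =>
    rw [PowerSeries.coeff_succ_X_mul, PowerSeries.coeff_one, if_neg (Nat.succ_ne_zero m)]
    cases m with
    | zero => simp [G]; norm_num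
    | succ l =>
      simp only [G, PowerSeries.coeff_mk, PowerSeries.coeff_X]
      have h1 : (l + 1 + 1 : ℕ) ≠ 0 := by omega
      have h2 : (l + 1 : ℕ) ≠ 0 := by omega
      have h3 : ¬ (l + 1 + 1 = 1) := by omega
      rw [if_neg h1, if_neg h2, if_neg h3, pow_succ]
      ring

lemma one_add_xL_ne : (1 + xL : LaurentSeries ℚ) ≠ 0 := by
  intro h
  have := congrArg (fun f : LaurentSeries ℚ => f.coeff 0) h
  simp only [HahnSeries.coeff_add, HahnSeries.coeff_zero] at this
  rw [oneL, xL] at this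
  simp [HahnSeries.coeff_single] at this

noncomputable def rL : LaurentSeries ℚ := (1 - xL)/(1 + xL)

lemma rL_eq : rL = HahnSeries.ofPowerSeries ℤ ℚ G := by
  rw [rL, div_eq_iff one_add_xL_ne]
  have : (1 - xL : LaurentSeries ℚ) = HahnSeries.ofPowerSeries ℤ ℚ (1 - PowerSeries.X) := by
    rw [map_sub, map_one, HahnSeries.ofPowerSeries_X, xL]
  rw [this, ← G_spec, map_mul, map_add, map_one, HahnSeries.ofPowerSeries_X, ← xL]
  ring

lemma rL_coeff (m : ℤ) : rL.coeff m
    = if m < 0 then 0 else if m = 0 then 1 else 2*(-1:ℚ)^m.natAbs := by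
  rw [rL_eq]
  rw [show (HahnSeries.ofPowerSeries ℤ ℚ G : LaurentSeries ℚ) = ((G : PowerSeries ℚ) : LaurentSeries ℚ) from rfl,
    PowerSeries.coeff_coe]
  by_cases h : m < 0
  · rw [if_pos h, if_pos h]
  · rw [if_neg h, if_neg h, G, PowerSeries.coeff_mk]
    by_cases h0 : m = 0
    · simp [h0]
    · rw [if_neg h0, if_neg (by omega : m.natAbs ≠ 0)]

lemma K0 (m : ℤ) : rL.coeff (-m) + rL.coeff m = 2 * (-1:ℚ)^m := by
  have key : ∀ k : ℕ, rL.coeff (-(k:ℤ)) + rL.coeff (k:ℤ) = 2 * (-1:ℚ)^(k:ℤ) := by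
    intro k
    rw [zpow_natCast]
    rcases Nat.eq_zero_or_pos k with h|h
    · subst h; norm_num [rL_coeff]
    · rw [rL_coeff, rL_coeff, if_pos (by omega : -(k:ℤ) < 0),
        if_neg (by omega : ¬ ((k:ℤ) < 0)), if_neg (by omega : ¬ ((k:ℤ) = 0))]
      rw [Int.natAbs_natCast]
      ring
  obtain ⟨k, rfl | rfl⟩ := Int.eq_nat_or_neg m
  · exact key k
  · rw [neg_neg, add_comm, zpow_neg, ← inv_zpow, inv_neg, inv_one]
    exact key k

lemma CT_mul_single (m : ℤ) (b : ℚ) :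
    (rL * HahnSeries.single m b).coeff 0 = rL.coeff (-m) * b := by
  rw [show (0:ℤ) = -m + m by ring, HahnSeries.coeff_mul_single_add]

lemma K (p : LaurentPolynomial ℚ) :
    (rL * Φ p).coeff 0 + (rL * Φ (σp p)).coeff 0 = 2 * ev p := by
  induction p using AddMonoidAlgebra.induction_linear with
  | zero => simp
  | add f g hf hg =>
    rw [map_add, map_add, map_add, mul_add, mul_add, HahnSeries.coeff_add,
      HahnSeries.coeff_add, map_add]
    linarith
  | single a b =>
    rw [σp_single, Φ_single, Φ_single, ev_single, CT_mul_single, CT_mul_single, neg_neg]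
    have h := K0 a
    calc rL.coeff (-a) * b + rL.coeff a * b = (rL.coeff (-a) + rL.coeff a) * b := by ring
      _ = 2 * (b * (-1:ℚ)^a) := by rw [h]; ring

lemma CT_of_symm {p : LaurentPolynomial ℚ} (hp : σp p = p) :
    (rL * Φ p).coeff 0 = ev p := by
  have h := K p
  rw [hp] at h
  linarith

noncomputable def FC : ℕ → LaurentSeries ℚ := fun n =>
  if n = 0 then 1 else if n = 1 then -2*uL else if n = 2 then uL^2 - 4*uL else 0

noncomputable def qF : ℕ → LaurentPolynomial ℚ := fun n =>
  if n = 0 then 1 else if n = 1 then -2*uP else if n = 2 then uP^2 - 4*uP else 0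

lemma Φ_qF (n : ℕ) : Φ (qF n) = FC n := by
  unfold qF FC
  split_ifs <;>
    simp only [map_one, map_mul, map_sub, map_neg, map_pow, map_ofNat, map_zero, Φ_uP]

lemma ev_qF (n : ℕ) : ev (qF n) = if n = 0 then 1 else 0 := by
  unfold qF
  split_ifs <;>
    simp only [map_one, map_mul, map_sub, map_neg, map_pow, map_ofNat, map_zero, ev_uP] <;>
    norm_num

lemma σp_qF (n : ℕ) : σp (qF n) = qF n := by
  unfold qF
  split_ifs <;>
    simp only [map_one, map_mul, map_sub, map_neg, map_pow, map_ofNat, map_zero, σp_uP]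

lemma coeff_RHS (n : ℕ) :
    PowerSeries.coeff n
      ((1 - PowerSeries.C uL * PowerSeries.X) ^ 2
        - 4 * PowerSeries.C uL * PowerSeries.X ^ 2) = FC n := by
  have expand : (1 - PowerSeries.C uL * PowerSeries.X) ^ 2
      - 4 * PowerSeries.C uL * PowerSeries.X ^ 2
      = 1 + PowerSeries.C (-2*uL) * PowerSeries.X
        + PowerSeries.C (uL^2 - 4*uL) * PowerSeries.X ^ 2 := by
    simp only [map_mul, map_sub, map_neg, map_pow, map_ofNat]
    ring
  rw [expand, map_add, map_add, PowerSeries.coeff_one, PowerSeries.coeff_C_mul,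
    PowerSeries.coeff_C_mul, PowerSeries.coeff_X, PowerSeries.coeff_X_pow]
  unfold FC
  rcases n with _|_|_|n <;> norm_num

lemma sum_eq (Δ : PowerSeries (LaurentSeries ℚ)) (hΔ : IsDeltaH Δ) (n : ℕ) :
    ∑ i ∈ Finset.range (n+1),
      PowerSeries.coeff i Δ * PowerSeries.coeff (n-i) Δ
      = FC n := by
  rw [← Finset.Nat.sum_antidiagonal_eq_sum_range_succ_mk
    (fun p => PowerSeries.coeff p.1 Δ * PowerSeries.coeff p.2 Δ)]
  rw [← PowerSeries.coeff_mul, ← sq, hΔ.2, coeff_RHS]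

lemma exists_sum {s : Finset ℕ} {f : ℕ → LaurentSeries ℚ}
    (h : ∀ i ∈ s, ∃ p, Φ p = f i ∧ σp p = p ∧ ev p = 0) :
    ∃ p, Φ p = ∑ i ∈ s, f i ∧ σp p = p ∧ ev p = 0 := by
  classical
  induction s using Finset.induction with
  | empty => exact ⟨0, by simp⟩
  | @insert a s ha ih =>
    obtain ⟨pa, hpa1, hpa2, hpa3⟩ := h a (Finset.mem_insert_self a s)
    obtain ⟨ps, hps1, hps2, hps3⟩ := ih (fun i hi => h i (Finset.mem_insert_of_mem hi))
    refine ⟨pa + ps, ?_, ?_, ?_⟩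
    · rw [map_add, hpa1, hps1, Finset.sum_insert ha]
    · rw [map_add, hpa2, hps2]
    · rw [map_add, hpa3, hps3, add_zero]

lemma main (Δ : PowerSeries (LaurentSeries ℚ)) (hΔ : IsDeltaH Δ) (n : ℕ) :
    ∃ p, Φ p = PowerSeries.coeff n Δ ∧ σp p = p ∧
      ev p = (if n = 0 then 1 else 0) := by
  induction n using Nat.strong_induction_on with
  | _ n ih =>
    have hδ0 : PowerSeries.coeff 0 Δ = 1 := by
      rw [PowerSeries.coeff_zero_eq_constantCoeff, hΔ.1]
    match n with
    | 0 => exact ⟨1, by simp [hδ0]⟩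
    | (m+1) =>
      set δ : ℕ → LaurentSeries ℚ := fun i => PowerSeries.coeff i Δ with hδ
      have hs := sum_eq Δ hΔ (m+1)
      rw [Finset.sum_range_succ', Finset.sum_range_succ] at hs
      -- hs : (∑ i in range m, δ (i+1) * δ (m+1-(i+1))) + δ (m+1) * δ (m+1-(m+1))
      --        + δ 0 * δ (m+1-0) = FC (m+1)
      simp only [Nat.add_sub_cancel, Nat.sub_self, Nat.sub_zero] at hs
      rw [hδ0] at hs
      -- representation for the middle sum
      have hterm : ∀ i ∈ Finset.range m, ∃ p,
          Φ p = δ (i+1) * δ (m+1-(i+1)) ∧ σp p = p ∧ ev p = 0 := by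
        intro i hi
        rw [Finset.mem_range] at hi
        obtain ⟨pa, ha1, ha2, ha3⟩ := ih (i+1) (by omega)
        obtain ⟨pb, hb1, hb2, hb3⟩ := ih (m+1-(i+1)) (by omega)
        refine ⟨pa * pb, ?_, ?_, ?_⟩
        · rw [map_mul, ha1, hb1]
        · rw [map_mul, ha2, hb2]
        · rw [map_mul, ha3, hb3]
          rw [if_neg (by omega : ¬ (i+1 = 0))]
          ring
      obtain ⟨s, hs1, hs2, hs3⟩ := exists_sum hterm
      set c : LaurentPolynomial ℚ := algebraMap ℚ (LaurentPolynomial ℚ) 2⁻¹ with hc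
      refine ⟨c * (qF (m+1) - s), ?_, ?_, ?_⟩
      · rw [map_mul, map_sub, Φ_qF, hs1, AlgHom.commutes]
        -- goal : algebraMap ℚ _ 2⁻¹ * (FC (m+1) - ∑ ...) = δ (m+1)
        have h2 : FC (m+1) - (∑ i ∈ Finset.range m, δ (i+1) * δ (m+1-(i+1)))
            = 2 * δ (m+1) := by
          rw [← hs]; ring
        rw [h2, ← mul_assoc]
        have : (algebraMap ℚ (LaurentSeries ℚ)) 2⁻¹ * 2 = 1 := by
          rw [show (2 : LaurentSeries ℚ) = algebraMap ℚ (LaurentSeries ℚ) 2 from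
            (map_ofNat _ 2).symm, ← map_mul]
          norm_num
        rw [this, one_mul]
      · rw [map_mul, map_sub, σp_qF, hs2, AlgHom.commutes]
      · rw [map_mul, map_sub, ev_qF, hs3, AlgHom.commutes]
        simp

end

/-- `CT_x ((1−x)/(1+x) · Δ̃) = 1`, coefficientwise in `t`. -/
theorem stmt19 (Δ : PowerSeries (LaurentSeries ℚ)) (hΔ : IsDeltaH Δ) (n : ℕ) :
    ((coeff n) (C ((1 - xL) / (1 + xL)) * Δ)).coeff 0
      = if n = 0 then 1 else 0 := by
  obtain ⟨p, hp1, hp2, hp3⟩ := main Δ hΔ n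
  rw [PowerSeries.coeff_C_mul, ← hp1]
  show (rL * Φ p).coeff 0 = _
  rw [CT_of_symm hp2, hp3]
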